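/- arXiv:2406.02981 — 16 statements merged into one kernel-verified Lean document; each statement's English description precedes it below -/
import Mathlib

section
/- Let f : {0,1}^n → {0,1} be a Boolean function and x ∈ {0,1}^n. A feature i ∈ {1,…,n} is locally necessary for (f,x) if and only if the singleton {i} is a local contrastive reason for (f,x). -/
/-- `comb S x z` is the input that equals `x` on coordinates in `S` and `z` outside `S`. -/
def comb {n : ℕ} (S : Finset (Fin n)) (x z : Fin n → Bool) : Fin n → Bool :=
  fun i => if i ∈ S then x i else z i

/-- `S` is a local sufficient reason for `(f, x)`. -/
def LocalSuff {n : ℕ} (f : (Fin n → Bool) → Bool) (x : Fin n → Bool)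
    (S : Finset (Fin n)) : Prop :=
  ∀ z : Fin n → Bool, f (comb S x z) = f x

/-- `S` is a local contrastive reason for `(f, x)`: some change of the features
in `S` (keeping `x` outside `S`) changes the prediction. -/
def LocalContrastive {n : ℕ} (f : (Fin n → Bool) → Bool) (x : Fin n → Bool)
    (S : Finset (Fin n)) : Prop :=
  ∃ z : Fin n → Bool, f (comb S z x) ≠ f x

/-- Feature `i` is locally necessary for `(f, x)`. -/
def LocallyNecessary {n : ℕ} (f : (Fin n → Bool) → Bool) (x : Fin n → Bool)
    (i : Fin n) : Prop :=
  ∀ S : Finset (Fin n), LocalSuff f x S → ¬ LocalSuff f x (S.erase i)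

theorem necessity_iff_singleton_contrastive {n : ℕ}
    (f : (Fin n → Bool) → Bool) (x : Fin n → Bool) (i : Fin n) :
    LocallyNecessary f x i ↔ LocalContrastive f x {i} := by
  constructor
  · intro h
    have hsuff : LocalSuff f x Finset.univ := by
      intro z
      congr 1
      funext j
      simp [comb]
    have hns := h Finset.univ hsuff
    rw [LocalSuff] at hns
    push_neg at hns
    obtain ⟨z, hz⟩ := hns
    refine ⟨z, ?_⟩
    have : comb ({i} : Finset (Fin n)) z x = comb (Finset.univ.erase i) x z := by
      funext j
      by_cases hj : j = i <;> simp [comb, hj]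
    rw [this]
    exact hz
  · rintro ⟨z, hz⟩ S _ hserase
    apply hz
    have : comb ({i} : Finset (Fin n)) z x
        = comb (S.erase i) x (comb ({i} : Finset (Fin n)) z x) := by
      funext j
      by_cases hj : j = i
      · simp [comb, hj]
      · by_cases hjS : j ∈ S <;> simp [comb, hj, hjS]
    rw [this]
    exact hserase _
end

section
/- Let f : {0,1}^n → {0,1} be a Boolean function and x ∈ {0,1}^n. A feature i ∈ {1,…,n} is locally necessary for (f,x) if and only if f(x⁽ⁱ⁾) ≠ f(x), where x⁽ⁱ⁾ denotes x with its i-th coordinate negated and all other coordinates unchanged. -/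
theorem necessity_iff_flip_changes {n : ℕ}
    (f : (Fin n → Bool) → Bool) (x : Fin n → Bool) (i : Fin n) :
    LocallyNecessary f x i ↔ f (Function.update x i (! x i)) ≠ f x := by
  constructor
  · intro hnec
    by_contra h
    apply hnec Finset.univ
    · intro z
      congr 1
      funext j
      simp [comb]
    · intro z
      by_cases hz : z i = x i
      · have : comb (Finset.univ.erase i) x z = x := by
          funext j
          by_cases hj : j = i
          · subst hj; simp [comb, hz]
          · simp [comb, hj]
        rw [this]
      · have : comb (Finset.univ.erase i) x z = Function.update x i (! x i) := by
          funext j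
          by_cases hj : j = i
          · subst hj
            simp [comb, Function.update]
            cases hxz : x j <;> cases hzz : z j <;> simp_all
          · simp [comb, hj, Function.update, hj]
        rw [this, h]
  · intro h S _ hSe
    apply h
    have := hSe (fun j => if j = i then ! x i else x j)
    rw [← this]
    congr 1
    funext j
    by_cases hj : j = i
    · subst hj; simp [comb, Function.update]
    · simp [comb, hj, Function.update]
end

section
/- Let f : {0,1}^n → {0,1} be a Boolean function. A feature i ∈ {1,…,n} is globally necessary for f if and only if for every x ∈ {0,1}^n, f(x⁽ⁱ⁾) ≠ f(x), where x⁽ⁱ⁾ denotes x with its i-th coordinate negated and all other coordinates unchanged. -/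
/-- Feature `i` is globally necessary for `f`: locally necessary for every input. -/
def GloballyNecessary {n : ℕ} (f : (Fin n → Bool) → Bool) (i : Fin n) : Prop :=
  ∀ x : Fin n → Bool, LocallyNecessary f x i

theorem globally_necessary_iff_flip_always_changes {n : ℕ}
    (f : (Fin n → Bool) → Bool) (i : Fin n) :
    GloballyNecessary f i ↔
      ∀ x : Fin n → Bool, f (Function.update x i (! x i)) ≠ f x := by
  constructor
  · intro hg x hfx
    have hsuff : LocalSuff f x Finset.univ := by
      intro z; congr 1; funext j; simp [comb]
    apply hg x Finset.univ hsuff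
    intro z
    have hc : comb (Finset.univ.erase i) x z = Function.update x i (z i) := by
      funext j
      by_cases hj : j = i
      · subst hj; simp [comb]
      · simp [comb, Function.update_of_ne hj, hj]
    rw [hc]
    by_cases hz : z i = x i
    · rw [hz, Function.update_eq_self]
    · have : z i = !x i := by cases hx : x i <;> cases hz' : z i <;> simp_all
      rw [this, hfx]
  · intro h x S _ hS'
    have hkey := hS' (Function.update x i (!x i))
    have heq : comb (S.erase i) x (Function.update x i (!x i))
        = Function.update x i (!x i) := by
      funext j
      by_cases hj : j = i
      · subst hj; simp [comb]
      · simp [comb, Function.update_of_ne hj]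
    rw [heq] at hkey
    exact h x hkey
end

section
/- Let f : {0,1}^n → {0,1} be a Boolean function. Every global contrastive reason S of f has nonempty intersection with every local sufficient reason of (f,x), for every x ∈ {0,1}^n. -/
/-- `S` is a global contrastive reason for `f`. -/
def GlobalContrastive {n : ℕ} (f : (Fin n → Bool) → Bool) (S : Finset (Fin n)) : Prop :=
  ∀ x : Fin n → Bool, ∃ z : Fin n → Bool, f (comb S z x) ≠ f x

theorem global_contrastive_hits_local_suff {n : ℕ}
    (f : (Fin n → Bool) → Bool) (S : Finset (Fin n)) (hS : GlobalContrastive f S)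
    (x : Fin n → Bool) (T : Finset (Fin n)) (hT : LocalSuff f x T) :
    (S ∩ T).Nonempty := by
  by_contra h
  rw [Finset.not_nonempty_iff_eq_empty] at h
  obtain ⟨z, hz⟩ := hS x
  apply hz
  have key : comb S z x = comb T x (comb S z x) := by
    funext i
    simp only [comb]
    by_cases hiT : i ∈ T
    · have hiS : i ∉ S := fun hiS =>
        Finset.notMem_empty i (h ▸ Finset.mem_inter.mpr ⟨hiS, hiT⟩)
      simp [hiT, hiS]
    · simp [hiT]
  rw [key, hT]
end

section
/- Let f : {0,1}^n → {0,1} be a Boolean function and let 𝒞 be the family of all subsets C ⊆ {1,…,n} such that C is a local contrastive reason for (f,x) for some x ∈ {0,1}^n. Then a subset S ⊆ {1,…,n} is a global sufficient reason for f if and only if S is a hitting set for 𝒞, i.e., S ∩ C ≠ ∅ for every C ∈ 𝒞. -/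
/-- `S` is a global sufficient reason for `f`. -/
def GlobalSuff {n : ℕ} (f : (Fin n → Bool) → Bool) (S : Finset (Fin n)) : Prop :=
  ∀ x z : Fin n → Bool, f (comb S x z) = f x

theorem global_suff_iff_hitting_set_of_contrastives {n : ℕ}
    (f : (Fin n → Bool) → Bool) (S : Finset (Fin n)) :
    GlobalSuff f S ↔
      ∀ C : Finset (Fin n), (∃ x : Fin n → Bool, LocalContrastive f x C) →
        (S ∩ C).Nonempty := by
  constructor
  · rintro hgs C ⟨x, z, hz⟩
    by_contra hemp
    rw [Finset.not_nonempty_iff_eq_empty, ← Finset.disjoint_iff_inter_eq_empty] at hemp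
    apply hz
    have h1 : comb S x (comb C z x) = comb C z x := by
      funext i
      simp only [comb]
      by_cases hi : i ∈ S
      · have : i ∉ C := Finset.disjoint_left.mp hemp hi
        simp [hi, this]
      · simp [hi]
    calc f (comb C z x) = f (comb S x (comb C z x)) := by rw [h1]
      _ = f x := hgs x _
  · intro h x z
    by_contra hne
    have : LocalContrastive f x Sᶜ := by
      refine ⟨z, ?_⟩
      have : comb Sᶜ z x = comb S x z := by
        funext i
        simp only [comb, Finset.mem_compl]
        by_cases hi : i ∈ S <;> simp [hi]
      rw [this]; exact hne
    obtain ⟨i, hi⟩ := h Sᶜ ⟨x, this⟩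
    simp at hi
end

section
/- Let f : {0,1}^n → {0,1} be a Boolean function and let 𝕊 be the family of all subsets T ⊆ {1,…,n} such that T is a local sufficient reason for (f,x) for some x ∈ {0,1}^n. Then a subset S ⊆ {1,…,n} is a global contrastive reason for f if and only if S is a hitting set for 𝕊, i.e., S ∩ T ≠ ∅ for every T ∈ 𝕊. -/
theorem global_contrastive_iff_hitting_set_of_sufficients {n : ℕ}
    (f : (Fin n → Bool) → Bool) (S : Finset (Fin n)) :
    GlobalContrastive f S ↔
      ∀ T : Finset (Fin n), (∃ x : Fin n → Bool, LocalSuff f x T) →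
        (S ∩ T).Nonempty := by
  constructor
  · intro hG T ⟨x, hT⟩
    by_contra hne
    rw [Finset.not_nonempty_iff_eq_empty] at hne
    obtain ⟨z, hz⟩ := hG x
    apply hz
    have : comb S z x = comb T x (comb S z x) := by
      funext i
      simp only [comb]
      by_cases hi : i ∈ T
      · have hiS : i ∉ S := fun hS => by
          have : i ∈ S ∩ T := Finset.mem_inter.mpr ⟨hS, hi⟩
          simp [hne] at this
        simp [hi, hiS]
      · simp [hi]
    rw [this, hT]
  · intro h x
    by_contra hc
    push_neg at hc
    have hsuff : LocalSuff f x Sᶜ := by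
      intro w
      have : comb Sᶜ x w = comb S w x := by
        funext i
        simp only [comb, Finset.mem_compl]
        by_cases hi : i ∈ S <;> simp [hi]
      rw [this, hc w]
    obtain ⟨i, hi⟩ := h Sᶜ ⟨x, hsuff⟩
    rw [Finset.mem_inter, Finset.mem_compl] at hi
    exact hi.2 hi.1
end

section
/- Let f : {0,1}^n → {0,1} be a Boolean function and let 𝒞 be the family of all subsets C ⊆ {1,…,n} such that C is a local contrastive reason for (f,x) for some x ∈ {0,1}^n. Then a subset S ⊆ {1,…,n} is a hitting set for 𝒞 of minimum cardinality among all hitting sets for 𝒞 if and only if S is a global sufficient reason for f of minimum cardinality among all global sufficient reasons for f. -/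
lemma hit_iff_suff {n : ℕ} (f : (Fin n → Bool) → Bool) (S : Finset (Fin n)) :
    (∀ C : Finset (Fin n), (∃ x : Fin n → Bool, LocalContrastive f x C) →
      (S ∩ C).Nonempty) ↔ GlobalSuff f S := by
  constructor
  · intro h x z
    by_contra hne
    have hc : ∃ x', LocalContrastive f x' Sᶜ := by
      refine ⟨x, z, ?_⟩
      have : comb Sᶜ z x = comb S x z := by
        funext i
        simp only [comb, Finset.mem_compl]
        by_cases hi : i ∈ S <;> simp [hi]
      rw [this]; exact hne
    obtain ⟨i, hi⟩ := h Sᶜ hc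
    simp [Finset.mem_inter, Finset.mem_compl] at hi
  · rintro h C ⟨x, z, hz⟩
    by_contra hempty
    rw [Finset.not_nonempty_iff_eq_empty] at hempty
    apply hz
    have h2 := h (comb C z x) x
    have : comb S (comb C z x) x = x := by
      funext i
      simp only [comb]
      by_cases hi : i ∈ S
      · have hiC : i ∉ C := fun hC => (Finset.eq_empty_iff_forall_notMem.mp hempty i)
          (Finset.mem_inter.mpr ⟨hi, hC⟩)
        simp [hi, hiC]
      · simp [hi]
    rw [this] at h2
    exact h2.symm

theorem mhs_of_contrastives_iff_min_global_suff {n : ℕ}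
    (f : (Fin n → Bool) → Bool) (S : Finset (Fin n)) :
    ((∀ C : Finset (Fin n), (∃ x : Fin n → Bool, LocalContrastive f x C) →
        (S ∩ C).Nonempty) ∧
      ∀ H : Finset (Fin n),
        (∀ C : Finset (Fin n), (∃ x : Fin n → Bool, LocalContrastive f x C) →
          (H ∩ C).Nonempty) → S.card ≤ H.card) ↔
    (GlobalSuff f S ∧ ∀ T : Finset (Fin n), GlobalSuff f T → S.card ≤ T.card) := by
  constructor
  · rintro ⟨h1, h2⟩
    exact ⟨(hit_iff_suff f S).mp h1, fun T hT => h2 T ((hit_iff_suff f T).mpr hT)⟩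
  · rintro ⟨h1, h2⟩
    exact ⟨(hit_iff_suff f S).mpr h1, fun H hH => h2 H ((hit_iff_suff f H).mp hH)⟩
end

section
/- Let f : {0,1}^n → {0,1} be a Boolean function and let 𝕊 be the family of all subsets T ⊆ {1,…,n} such that T is a local sufficient reason for (f,x) for some x ∈ {0,1}^n. Then a subset S ⊆ {1,…,n} is a hitting set for 𝕊 of minimum cardinality among all hitting sets for 𝕊 if and only if S is a global contrastive reason for f of minimum cardinality among all global contrastive reasons for f. -/
lemma hitting_iff_contrastive {n : ℕ} (f : (Fin n → Bool) → Bool) (S : Finset (Fin n)) :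
    (∀ T : Finset (Fin n), (∃ x : Fin n → Bool, LocalSuff f x T) → (S ∩ T).Nonempty) ↔
    GlobalContrastive f S := by
  constructor
  · intro h x
    by_contra hc
    push_neg at hc
    have hsuff : LocalSuff f x Sᶜ := by
      intro z
      have : comb Sᶜ x z = comb S z x := by
        funext i
        simp [comb, Finset.mem_compl]
      rw [this]
      exact hc z
    have := h Sᶜ ⟨x, hsuff⟩
    simp at this
  · rintro h T ⟨x, hT⟩
    by_contra hc
    rw [Finset.not_nonempty_iff_eq_empty] at hc
    obtain ⟨z, hz⟩ := h x
    apply hz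
    have heq : comb T x (comb S z x) = comb S z x := by
      funext i
      by_cases hi : i ∈ T
      · have hiS : i ∉ S := fun hiS =>
          (Finset.notMem_empty i) (hc ▸ Finset.mem_inter.mpr ⟨hiS, hi⟩)
        simp [comb, hi, hiS]
      · simp [comb, hi]
    rw [← heq]
    exact hT (comb S z x)

theorem mhs_of_sufficients_iff_min_global_contrastive {n : ℕ}
    (f : (Fin n → Bool) → Bool) (S : Finset (Fin n)) :
    ((∀ T : Finset (Fin n), (∃ x : Fin n → Bool, LocalSuff f x T) →
        (S ∩ T).Nonempty) ∧
      ∀ H : Finset (Fin n),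
        (∀ T : Finset (Fin n), (∃ x : Fin n → Bool, LocalSuff f x T) →
          (H ∩ T).Nonempty) → S.card ≤ H.card) ↔
    (GlobalContrastive f S ∧
      ∀ T : Finset (Fin n), GlobalContrastive f T → S.card ≤ T.card) := by
  simp only [hitting_iff_contrastive]
end

section
/- Let n ≥ 1, let f : {0,1}^n → {0,1} be the threshold function defined by f(y) = 1 if and only if the number of coordinates of y equal to 1 is at least ⌊n/2⌋, and let x = (1,…,1) be the all-ones input. Then a subset S ⊆ {1,…,n} is a subset-minimal local sufficient reason for (f,x) if and only if |S| = ⌊n/2⌋; consequently, the number of subset-minimal local sufficient reasons for (f,x) equals the binomial coefficient C(n, ⌊n/2⌋), and every subset-minimal local sufficient reason for (f,x) is also of minimum cardinality among local sufficient reasons for (f,x). -/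
/-- `S` is a subset-minimal local sufficient reason for `(f, x)`. -/
def SubsetMinimalLocalSuff {n : ℕ} (f : (Fin n → Bool) → Bool) (x : Fin n → Bool)
    (S : Finset (Fin n)) : Prop :=
  LocalSuff f x S ∧ ∀ T : Finset (Fin n), T ⊂ S → ¬ LocalSuff f x T

lemma fx_true {n : ℕ} (f : (Fin n → Bool) → Bool)
    (hf : ∀ y : Fin n → Bool,
      f y = true ↔ n / 2 ≤ (Finset.univ.filter (fun i => y i = true)).card)
    (x : Fin n → Bool) (hx : ∀ i, x i = true) : f x = true := by
  rw [hf]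
  have h : (Finset.univ.filter (fun i => x i = true)) = (Finset.univ : Finset (Fin n)) := by
    ext i; simp [hx i]
  rw [h, Finset.card_univ, Fintype.card_fin]
  exact Nat.div_le_self n 2

lemma localSuff_iff {n : ℕ} (f : (Fin n → Bool) → Bool)
    (hf : ∀ y : Fin n → Bool,
      f y = true ↔ n / 2 ≤ (Finset.univ.filter (fun i => y i = true)).card)
    (x : Fin n → Bool) (hx : ∀ i, x i = true) (S : Finset (Fin n)) :
    LocalSuff f x S ↔ n / 2 ≤ S.card := by
  constructor
  · intro h
    have h0 := h (fun _ => false)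
    rw [fx_true f hf x hx, hf] at h0
    have hfe : (Finset.univ.filter (fun i => comb S x (fun _ => false) i = true)) = S := by
      ext i; simp [comb, hx i]
    rwa [hfe] at h0
  · intro h z
    rw [fx_true f hf x hx, hf]
    have hsub : S ⊆ Finset.univ.filter (fun i => comb S x z i = true) := by
      intro i hi; simp [comb, hi, hx i]
    exact le_trans h (Finset.card_le_card hsub)

theorem threshold_minimal_suff_reasons {n : ℕ} (hn : 1 ≤ n)
    (f : (Fin n → Bool) → Bool)
    (hf : ∀ y : Fin n → Bool,
      f y = true ↔ n / 2 ≤ (Finset.univ.filter (fun i => y i = true)).card)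
    (x : Fin n → Bool) (hx : ∀ i, x i = true) :
    (∀ S : Finset (Fin n), SubsetMinimalLocalSuff f x S ↔ S.card = n / 2) ∧
    Nat.card {S : Finset (Fin n) // SubsetMinimalLocalSuff f x S} =
      Nat.choose n (n / 2) ∧
    (∀ S : Finset (Fin n), SubsetMinimalLocalSuff f x S →
      ∀ T : Finset (Fin n), LocalSuff f x T → S.card ≤ T.card) := by
  have key : ∀ S : Finset (Fin n), SubsetMinimalLocalSuff f x S ↔ S.card = n / 2 := by
    intro S
    constructor
    · rintro ⟨hs, hmin⟩
      have h1 : n / 2 ≤ S.card := (localSuff_iff f hf x hx S).mp hs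
      by_contra hne
      have hlt : n / 2 < S.card := lt_of_le_of_ne h1 (Ne.symm hne)
      obtain ⟨i, hi⟩ := Finset.card_pos.mp (lt_of_le_of_lt (Nat.zero_le _) hlt)
      have hTsuff : LocalSuff f x (S.erase i) := by
        rw [localSuff_iff f hf x hx]
        rw [Finset.card_erase_of_mem hi]
        omega
      exact hmin (S.erase i) (Finset.erase_ssubset hi) hTsuff
    · intro hcard
      refine ⟨(localSuff_iff f hf x hx S).mpr hcard.ge, fun T hT hTsuff => ?_⟩
      have := (localSuff_iff f hf x hx T).mp hTsuff
      have := Finset.card_lt_card hT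
      omega
  refine ⟨key, ?_, ?_⟩
  · have e : {S : Finset (Fin n) // SubsetMinimalLocalSuff f x S} ≃
        {S : Finset (Fin n) // S.card = n / 2} := Equiv.subtypeEquivRight key
    rw [Nat.card_eq_of_equiv_fin (e.trans (Fintype.equivFin _))]
    rw [Fintype.card_subtype]
    have hfe : (Finset.univ.filter (fun S : Finset (Fin n) => S.card = n / 2)) =
        Finset.powersetCard (n / 2) Finset.univ := by
      ext T; simp [Finset.mem_powersetCard]
    rw [hfe, Finset.card_powersetCard, Finset.card_univ, Fintype.card_fin]
  · intro S hS T hT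
    rw [key S] at hS
    have := (localSuff_iff f hf x hx T).mp hT
    omega
end

section
/- Let f : {0,1}^n → {0,1} be a non-trivial Boolean function and let S₁ and S₂ be two global sufficient reasons for f. Then S = S₁ ∩ S₂ is nonempty, and S is a global sufficient reason for f. -/
theorem global_suff_inter {n : ℕ}
    (f : (Fin n → Bool) → Bool)
    (hf : ∃ x y : Fin n → Bool, f x = true ∧ f y = false)
    (S₁ S₂ : Finset (Fin n)) (h₁ : GlobalSuff f S₁) (h₂ : GlobalSuff f S₂) :
    (S₁ ∩ S₂).Nonempty ∧ GlobalSuff f (S₁ ∩ S₂) := by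
  have key : GlobalSuff f (S₁ ∩ S₂) := by
    intro x z
    have e : comb S₂ (comb (S₁ ∩ S₂) x z) x = comb S₁ x (comb S₂ z x) := by
      funext i
      simp only [comb, Finset.mem_inter]
      by_cases h1 : i ∈ S₁ <;> by_cases h2 : i ∈ S₂ <;> simp [h1, h2]
    calc f (comb (S₁ ∩ S₂) x z) = f (comb S₂ (comb (S₁ ∩ S₂) x z) x) := (h₂ _ _).symm
      _ = f (comb S₁ x (comb S₂ z x)) := by rw [e]
      _ = f x := h₁ _ _
  refine ⟨?_, key⟩
  by_contra hne
  rw [Finset.not_nonempty_iff_eq_empty] at hne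
  obtain ⟨x, y, hx, hy⟩ := hf
  have hc : comb (S₁ ∩ S₂) x y = y := by
    funext i; simp [comb, hne]
  have := key x y
  rw [hc, hx, hy] at this
  exact Bool.false_ne_true this
end

section
/- For every Boolean function f : {0,1}^n → {0,1}, there exists exactly one subset-minimal global sufficient reason for f. -/
theorem unique_subset_minimal_global_suff {n : ℕ}
    (f : (Fin n → Bool) → Bool) :
    ∃! S : Finset (Fin n),
      GlobalSuff f S ∧ ∀ T : Finset (Fin n), T ⊂ S → ¬ GlobalSuff f T := by
  classical
  set R : Finset (Fin n) :=
    Finset.univ.filter (fun i => ¬ ∀ x b, f (Function.update x i b) = f x) with hR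
  have hmemR : ∀ i, i ∉ R ↔ ∀ x b, f (Function.update x i b) = f x := by
    intro i; simp [hR]
  -- changing irrelevant coordinates doesn't change f
  have key : ∀ (D : Finset (Fin n)), ∀ x y : Fin n → Bool,
      (∀ i, x i ≠ y i → i ∈ D) → (∀ i ∈ D, i ∉ R) → f x = f y := by
    intro D
    induction D using Finset.induction_on with
    | empty =>
      intro x y h _
      have : x = y := funext fun i => by
        by_contra hne; exact absurd (h i hne) (Finset.notMem_empty i)
      rw [this]
    | @insert a s ha ih =>
      intro x y hdiff hout
      have hy' : f (Function.update y a (x a)) = f y :=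
        (hmemR a).mp (hout a (Finset.mem_insert_self a s)) y (x a)
      have := ih x (Function.update y a (x a))
        (by
          intro i hi
          by_cases hia : i = a
          · subst hia; simp at hi
          · rw [Function.update_of_ne hia] at hi
            rcases Finset.mem_insert.mp (hdiff i hi) with h | h
            · exact absurd h hia
            · exact h)
        (fun i hi => hout i (Finset.mem_insert_of_mem hi))
      rw [this, hy']
  have hGR : GlobalSuff f R := by
    intro x z
    refine (key (Finset.univ \ R) (comb R x z) x ?_ ?_).symm.symm
    · intro i hi
      by_cases hiR : i ∈ R
      · exact absurd (by simp [comb, hiR]) hi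
      · exact Finset.mem_sdiff.mpr ⟨Finset.mem_univ i, hiR⟩
    · intro i hi; exact (Finset.mem_sdiff.mp hi).2
  have hsub : ∀ S, GlobalSuff f S → R ⊆ S := by
    intro S hS i hiR
    by_contra hiS
    have hirr : ∀ x b, f (Function.update x i b) = f x := by
      intro x b
      have h1 : f (comb S (Function.update x i b) x) = f (Function.update x i b) := hS _ _
      have h2 : f (comb S x x) = f x := hS _ _
      have e1 : comb S (Function.update x i b) x = comb S x x := by
        funext j
        by_cases hj : j ∈ S
        · simp only [comb, if_pos hj]
          rw [Function.update_of_ne (by rintro rfl; exact hiS hj)]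
        · simp [comb, hj]
      rw [e1, h2] at h1
      exact h1.symm
    have : i ∉ R := (hmemR i).mpr hirr
    exact this hiR
  refine ⟨R, ⟨hGR, ?_⟩, ?_⟩
  · intro T hT hGT
    exact hT.2 (hsub T hGT)
  · intro S ⟨hGS, hSmin⟩
    have hRS : R ⊆ S := hsub S hGS
    by_contra h
    exact hSmin R (hRS.ssubset_of_ne (Ne.symm h)) hGR
end

section
/- Let f : {0,1}^n → {0,1} be a Boolean function and let S be a subset-minimal global sufficient reason for f. Then for every feature i ∈ {1,…,n}: i ∈ S if and only if i is locally necessary for (f,x) for some x ∈ {0,1}^n, and i ∉ S if and only if i is globally redundant for f. -/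
/-- Feature `i` is globally redundant for `f`. -/
def GloballyRedundant {n : ℕ} (f : (Fin n → Bool) → Bool) (i : Fin n) : Prop :=
  ∀ (x : Fin n → Bool) (S : Finset (Fin n)),
    LocalSuff f x S → LocalSuff f x (S.erase i)

/-- If `S` is globally sufficient, `f` depends only on coordinates in `S`. -/
lemma global_suff_eq_on {n : ℕ} (f : (Fin n → Bool) → Bool) (S : Finset (Fin n))
    (h : GlobalSuff f S) (a b : Fin n → Bool) (hab : ∀ j ∈ S, a j = b j) :
    f a = f b := by
  have h1 := h a b
  have h2 : comb S a b = b := by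
    funext j
    by_cases hj : j ∈ S
    · simp [comb, hj, hab j hj]
    · simp [comb, hj]
  rw [h2] at h1
  exact h1.symm

lemma notMem_redundant {n : ℕ} (f : (Fin n → Bool) → Bool) (S : Finset (Fin n))
    (hS : GlobalSuff f S) {i : Fin n} (hi : i ∉ S) : GloballyRedundant f i := by
  intro x T hT z
  have key : f (comb (T.erase i) x z) = f (comb T x z) := by
    apply global_suff_eq_on f S hS
    intro j hj
    have hji : j ≠ i := fun h => hi (h ▸ hj)
    by_cases hjT : j ∈ T
    · simp [comb, hjT, Finset.mem_erase, hji]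
    · simp [comb, hjT, fun h => hjT (Finset.mem_of_mem_erase h)]
  rw [key]
  exact hT z

lemma mem_necessary {n : ℕ} (f : (Fin n → Bool) → Bool) (S : Finset (Fin n))
    (hS : GlobalSuff f S ∧ ∀ T : Finset (Fin n), T ⊂ S → ¬ GlobalSuff f T)
    {i : Fin n} (hi : i ∈ S) : ∃ x : Fin n → Bool, LocallyNecessary f x i := by
  have hne : ¬ GlobalSuff f (S.erase i) := hS.2 _ (Finset.erase_ssubset hi)
  simp only [GlobalSuff, not_forall] at hne
  obtain ⟨x, z, hxz⟩ := hne
  refine ⟨x, ?_⟩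
  intro T hT hTe
  apply hxz
  set w : Fin n → Bool := Function.update x i (z i) with hw
  have key : f (comb (S.erase i) x z) = f (comb (T.erase i) x w) := by
    apply global_suff_eq_on f S hS.1
    intro j hj
    by_cases hji : j = i
    · subst hji
      simp [comb, hw, Function.update_self]
    · have hx : comb (S.erase i) x z j = x j := by
        simp [comb, Finset.mem_erase, hji, hj]
      rw [hx]
      by_cases hjT : j ∈ T.erase i
      · simp [comb, hjT]
      · simp [comb, hjT, hw, Function.update_of_ne hji]
  rw [key]
  exact hTe w

lemma redundant_not_necessary {n : ℕ} (f : (Fin n → Bool) → Bool) {i : Fin n}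
    (hr : GloballyRedundant f i) (x : Fin n → Bool) :
    ¬ LocallyNecessary f x i := by
  intro hn
  have huniv : LocalSuff f x Finset.univ := by
    intro z
    have : comb Finset.univ x z = x := by
      funext j; simp [comb]
    rw [this]
  exact hn Finset.univ huniv (hr x Finset.univ huniv)

theorem minimal_global_suff_characterization {n : ℕ}
    (f : (Fin n → Bool) → Bool) (S : Finset (Fin n))
    (hS : GlobalSuff f S ∧ ∀ T : Finset (Fin n), T ⊂ S → ¬ GlobalSuff f T) :
    ∀ i : Fin n,
      (i ∈ S ↔ ∃ x : Fin n → Bool, LocallyNecessary f x i) ∧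
      (i ∉ S ↔ GloballyRedundant f i) := by
  intro i
  constructor
  · constructor
    · exact fun hi => mem_necessary f S hS hi
    · rintro ⟨x, hx⟩
      by_contra hi
      exact redundant_not_necessary f (notMem_redundant f S hS.1 hi) x hx
  · constructor
    · exact fun hi => notMem_redundant f S hS.1 hi
    · intro hr hi
      obtain ⟨x, hx⟩ := mem_necessary f S hS hi
      exact redundant_not_necessary f hr x hx
end

section
/- Let f : {0,1}^n → {0,1} be a Boolean function. Every feature i ∈ {1,…,n} is either locally necessary for (f,x) for some x ∈ {0,1}^n, or globally redundant for f. -/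
theorem necessary_or_redundant {n : ℕ}
    (f : (Fin n → Bool) → Bool) (i : Fin n) :
    (∃ x : Fin n → Bool, LocallyNecessary f x i) ∨ GloballyRedundant f i := by
  by_cases hGR : GloballyRedundant f i
  · exact Or.inr hGR
  · left
    simp only [GloballyRedundant, not_forall] at hGR
    obtain ⟨x, S, hS, hnot⟩ := hGR
    simp only [LocalSuff, not_forall] at hnot
    obtain ⟨z, hz⟩ := hnot
    set y := comb S x z with hy
    set y' := comb (S.erase i) x z with hy'
    have hagree : ∀ j : Fin n, j ≠ i → y' j = y j := by
      intro j hj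
      simp [hy, hy', comb, Finset.mem_erase, hj]
    have hfy : f y = f x := hS z
    have hfy' : f y' ≠ f y := by rw [hfy]; exact hz
    refine ⟨y, ?_⟩
    intro S' _ hsuff
    have hcomb : comb (S'.erase i) y y' = y' := by
      funext j
      by_cases hj : j ∈ S'.erase i
      · have hji : j ≠ i := Finset.ne_of_mem_erase hj
        simp [comb, hj, hagree j hji]
      · simp [comb, hj]
    have := hsuff y'
    rw [hcomb] at this
    exact hfy' this
end

section
/- Let f : {0,1}^n → {0,1} be a Boolean function. A subset S ⊆ {1,…,n} is a global sufficient reason for f if and only if every feature i ∈ {1,…,n} \ S is globally redundant for f. -/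
lemma globalSuff_agree {n : ℕ} {f : (Fin n → Bool) → Bool} {S : Finset (Fin n)}
    (h : GlobalSuff f S) {a b : Fin n → Bool} (hab : ∀ i ∈ S, a i = b i) :
    f a = f b := by
  have : comb S a b = b := by
    funext i
    simp only [comb]
    split_ifs with hi
    · exact hab i hi
    · rfl
  calc f a = f (comb S a b) := (h a b).symm
    _ = f b := by rw [this]

theorem global_suff_iff_complement_redundant {n : ℕ}
    (f : (Fin n → Bool) → Bool) (S : Finset (Fin n)) :
    GlobalSuff f S ↔ ∀ i : Fin n, i ∉ S → GloballyRedundant f i := by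
  constructor
  · intro h i hiS x T hT z
    set w := comb (T.erase i) x z with hw
    have h1 : f w = f (comb T x w) := by
      apply globalSuff_agree h
      intro j hj
      simp only [comb, hw]
      by_cases hjT : j ∈ T
      · have hji : j ≠ i := fun e => hiS (e ▸ hj)
        simp [hjT, hji]
      · simp [hjT, Finset.mem_erase, hjT]
    rw [h1, hT w]
  · intro h x z
    have key : ∀ A : Finset (Fin n), (∀ i ∈ A, i ∉ S) →
        LocalSuff f x (Finset.univ \ A) := by
      intro A
      induction A using Finset.induction_on with
      | empty =>
        intro _ z
        have : comb (Finset.univ \ ∅) x z = x := by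
          funext i; simp [comb]
        rw [this]
      | @insert a A' ha ih =>
        intro hA
        have : Finset.univ \ insert a A' = (Finset.univ \ A').erase a := by
          ext j
          simp [Finset.mem_erase, and_comm]
        rw [this]
        exact h a (hA a (Finset.mem_insert_self a A')) x _
          (ih fun i hi => hA i (Finset.mem_insert_of_mem hi))
    have : Finset.univ \ (Finset.univ \ S) = S := by simp
    have := key (Finset.univ \ S) (by simp) 
    rw [show Finset.univ \ (Finset.univ \ S) = S by simp] at this
    exact this z
end

section
/- Let w ∈ ℚⁿ, b ∈ ℚ, and let f : {0,1}^n → {0,1} be the Perceptron defined by f(y) = 1 if and only if ∑ᵢ wᵢ·yᵢ + b > 0 (where the binary coordinates yᵢ are interpreted as the rationals 0 and 1). For every x ∈ {0,1}^n and every S ⊆ {1,…,n}, S is a local sufficient reason for (f,x) if and only if either ∑_{i∈S} wᵢ·xᵢ + ∑_{i∉S} max(wᵢ, 0) + b ≤ 0, or ∑_{i∈S} wᵢ·xᵢ + ∑_{i∉S} min(wᵢ, 0) + b > 0. -/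
/-- Interpret a binary coordinate as the rational `0` or `1`. -/
def bval (b : Bool) : ℚ := if b then 1 else 0

theorem perceptron_local_suff_iff {n : ℕ} (w : Fin n → ℚ) (b : ℚ)
    (f : (Fin n → Bool) → Bool)
    (hf : ∀ y : Fin n → Bool, f y = true ↔ 0 < (∑ i, w i * bval (y i)) + b)
    (x : Fin n → Bool) (S : Finset (Fin n)) :
    LocalSuff f x S ↔
      ((∑ i ∈ S, w i * bval (x i)) + (∑ i ∈ Sᶜ, max (w i) 0) + b ≤ 0 ∨
        0 < (∑ i ∈ S, w i * bval (x i)) + (∑ i ∈ Sᶜ, min (w i) 0) + b) := by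
  have key : ∀ z : Fin n → Bool, (∑ i, w i * bval (comb S x z i)) =
      (∑ i ∈ S, w i * bval (x i)) + ∑ i ∈ Sᶜ, w i * bval (z i) := by
    intro z
    rw [← Finset.sum_add_sum_compl S]
    congr 1
    · exact Finset.sum_congr rfl fun i hi => by simp [comb, hi]
    · exact Finset.sum_congr rfl fun i hi => by
        simp [comb, Finset.mem_compl.mp hi]
  have keyx : (∑ i, w i * bval (x i)) =
      (∑ i ∈ S, w i * bval (x i)) + ∑ i ∈ Sᶜ, w i * bval (x i) :=
    (Finset.sum_add_sum_compl S _).symm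
  have hub : ∀ z : Fin n → Bool,
      (∑ i ∈ Sᶜ, w i * bval (z i)) ≤ ∑ i ∈ Sᶜ, max (w i) 0 := by
    intro z
    refine Finset.sum_le_sum fun i _ => ?_
    cases z i <;> simp [bval, le_max_iff, le_refl]
  have hlb : ∀ z : Fin n → Bool,
      (∑ i ∈ Sᶜ, min (w i) 0) ≤ ∑ i ∈ Sᶜ, w i * bval (z i) := by
    intro z
    refine Finset.sum_le_sum fun i _ => ?_
    cases z i <;> simp [bval, min_le_iff, le_refl]
  constructor
  · intro h
    by_cases hx : f x = true
    · right
      set zmin : Fin n → Bool := fun i => decide (w i < 0) with hz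
      have h1 : f (comb S x zmin) = true := (h zmin).trans hx
      have h2 := (hf _).mp h1
      rw [key zmin] at h2
      have h3 : (∑ i ∈ Sᶜ, w i * bval (zmin i)) = ∑ i ∈ Sᶜ, min (w i) 0 := by
        refine Finset.sum_congr rfl fun i _ => ?_
        by_cases hw : w i < 0
        · simp [hz, hw, bval, min_eq_left hw.le]
        · simp [hz, hw, bval, min_eq_right (not_lt.mp hw)]
      rw [h3] at h2
      linarith
    · left
      set zmax : Fin n → Bool := fun i => decide (0 < w i) with hz
      have h1 : ¬ f (comb S x zmax) = true := by rw [h zmax]; exact hx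
      have h2 := fun hc => h1 ((hf _).mpr hc)
      rw [key zmax] at h2
      have h3 : (∑ i ∈ Sᶜ, w i * bval (zmax i)) = ∑ i ∈ Sᶜ, max (w i) 0 := by
        refine Finset.sum_congr rfl fun i _ => ?_
        by_cases hw : 0 < w i
        · simp [hz, hw, bval, max_eq_left hw.le]
        · simp [hz, hw, bval, max_eq_right (not_lt.mp hw)]
      rw [h3] at h2
      linarith [not_lt.mp h2]
  · rintro (h1 | h1) z
    · have hcz : ¬ f (comb S x z) = true := by
        rw [hf, key z]
        push_neg
        linarith [hub z]
      have hx : ¬ f x = true := by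
        rw [hf, keyx]
        push_neg
        linarith [hub x]
      rw [Bool.not_eq_true] at hcz hx
      rw [hcz, hx]
    · have hcz : f (comb S x z) = true := by
        rw [hf, key z]
        linarith [hlb z]
      have hx : f x = true := by
        rw [hf, keyx]
        linarith [hlb x]
      rw [hcz, hx]
end

section
/- Let w ∈ ℚⁿ, b ∈ ℚ, and let f : {0,1}^n → {0,1} be the Perceptron defined by f(y) = 1 if and only if ∑ᵢ wᵢ·yᵢ + b > 0 (where the binary coordinates yᵢ are interpreted as the rationals 0 and 1). For every S ⊆ {1,…,n}, S is a global sufficient reason for f if and only if for every x ∈ {0,1}^n, either ∑_{i∈S} wᵢ·xᵢ + ∑_{i∉S} max(wᵢ, 0) + b ≤ 0, or ∑_{i∈S} wᵢ·xᵢ + ∑_{i∉S} min(wᵢ, 0) + b > 0. -/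
lemma bval_bounds (w : ℚ) (z : Bool) : min w 0 ≤ w * bval z ∧ w * bval z ≤ max w 0 := by
  cases z <;> simp [bval]

theorem perceptron_global_suff_iff {n : ℕ} (w : Fin n → ℚ) (b : ℚ)
    (f : (Fin n → Bool) → Bool)
    (hf : ∀ y : Fin n → Bool, f y = true ↔ 0 < (∑ i, w i * bval (y i)) + b)
    (S : Finset (Fin n)) :
    GlobalSuff f S ↔
      ∀ x : Fin n → Bool,
        ((∑ i ∈ S, w i * bval (x i)) + (∑ i ∈ Sᶜ, max (w i) 0) + b ≤ 0 ∨
          0 < (∑ i ∈ S, w i * bval (x i)) + (∑ i ∈ Sᶜ, min (w i) 0) + b) := by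
  have hsplit : ∀ y : Fin n → Bool,
      (∑ i, w i * bval (y i)) = (∑ i ∈ S, w i * bval (y i)) + (∑ i ∈ Sᶜ, w i * bval (y i)) :=
    fun y => (Finset.sum_add_sum_compl S _).symm
  have hcombS : ∀ x z : Fin n → Bool,
      (∑ i ∈ S, w i * bval (comb S x z i)) = ∑ i ∈ S, w i * bval (x i) :=
    fun x z => Finset.sum_congr rfl (fun i hi => by simp [comb, hi])
  have hub : ∀ y : Fin n → Bool,
      (∑ i ∈ Sᶜ, w i * bval (y i)) ≤ ∑ i ∈ Sᶜ, max (w i) 0 :=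
    fun y => Finset.sum_le_sum (fun i _ => (bval_bounds (w i) (y i)).2)
  have hlb : ∀ y : Fin n → Bool,
      (∑ i ∈ Sᶜ, min (w i) 0) ≤ ∑ i ∈ Sᶜ, w i * bval (y i) :=
    fun y => Finset.sum_le_sum (fun i _ => (bval_bounds (w i) (y i)).1)
  constructor
  · intro h x
    by_cases hx : f x = true
    · right
      set z : Fin n → Bool := fun i => decide (w i < 0) with hz
      have h1 : f (comb S x z) = true := by rw [h]; exact hx
      rw [hf, hsplit, hcombS] at h1
      have e2 : (∑ i ∈ Sᶜ, w i * bval (comb S x z i)) = ∑ i ∈ Sᶜ, min (w i) 0 :=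
        Finset.sum_congr rfl (fun i hi => by
          have hni : i ∉ S := Finset.mem_compl.mp hi
          by_cases hw : w i < 0
          · simp [comb, hni, hz, hw, bval, min_eq_left hw.le]
          · simp [comb, hni, hz, hw, bval, min_eq_right (not_lt.mp hw)])
      rw [e2] at h1
      exact h1
    · left
      have hxf : f x = false := by simpa using hx
      set z : Fin n → Bool := fun i => decide (0 < w i) with hz
      have h1 : f (comb S x z) = false := by rw [h]; exact hxf
      have h2 : ¬ (0 < (∑ i, w i * bval (comb S x z i)) + b) := by
        rw [← hf]; simp [h1]
      rw [hsplit, hcombS] at h2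
      have e2 : (∑ i ∈ Sᶜ, w i * bval (comb S x z i)) = ∑ i ∈ Sᶜ, max (w i) 0 :=
        Finset.sum_congr rfl (fun i hi => by
          have hni : i ∉ S := Finset.mem_compl.mp hi
          by_cases hw : 0 < w i
          · simp [comb, hni, hz, hw, bval, max_eq_left hw.le]
          · simp [comb, hni, hz, hw, bval, max_eq_right (not_lt.mp hw)])
      rw [e2] at h2
      linarith [not_lt.mp h2]
  · intro h x z
    rcases h x with hle | hgt
    · have hx : f x = false := by
        rw [← Bool.not_eq_true, hf, hsplit]
        have := hub x
        push_neg
        linarith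
      have hc : f (comb S x z) = false := by
        rw [← Bool.not_eq_true, hf, hsplit, hcombS]
        have := hub (comb S x z)
        push_neg
        linarith [hub (fun i => comb S x z i)]
      rw [hx, hc]
    · have hx : f x = true := by
        rw [hf, hsplit]
        have := hlb x
        linarith
      have hc : f (comb S x z) = true := by
        rw [hf, hsplit, hcombS]
        linarith [hlb (fun i => comb S x z i)]
      rw [hx, hc]
end
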